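/- Let n ≥ 2, let T ≥ 0, and let X be a real symmetric n×n matrix satisfying the 2×2 minor constraints (X_{ij}² ≤ X_{ii}·X_{jj} for all pairs i, j), X_{ii} ≥ 0 for all i, and tr(X) ≤ T. Then the smallest eigenvalue of X satisfies λ_min(X) ≥ 2T/n − T. -/
import Mathlib

open Finset Matrix

theorem quad_bound (n : ℕ) (hn : 2 ≤ n) (T : ℝ) (hT : 0 ≤ T)
    (X : Matrix (Fin n) (Fin n) ℝ)
    (hminor : ∀ i j, (X i j) ^ 2 ≤ X i i * X j j)
    (hdiag : ∀ i, 0 ≤ X i i)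
    (htr : X.trace ≤ T)
    (w : Fin n → ℝ) (hw : ∑ j, w j ^ 2 = 1) :
    2 * T / n - T ≤ ∑ i, ∑ j, w i * X i j * w j := by
  set b : Fin n → ℝ := fun i => Real.sqrt (X i i) * |w i| with hbdef
  have habs : ∀ i j, |X i j| ≤ Real.sqrt (X i i) * Real.sqrt (X j j) := by
    intro i j
    rw [← Real.sqrt_mul (hdiag i), ← Real.sqrt_sq_eq_abs]
    exact Real.sqrt_le_sqrt (hminor i j)
  have hpt : ∀ i j, -(b i * b j) + (if i = j then 2 * b i ^ 2 else 0) ≤ w i * X i j * w j := by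
    intro i j
    by_cases h : i = j
    · subst h
      simp only [if_pos rfl, if_true]
      have hbi : w i * X i i * w i = b i ^ 2 := by
        simp only [hbdef]
        have h1 := Real.sq_sqrt (hdiag i)
        nlinarith [sq_abs (w i)]
      linarith [hbi, pow_two (b i)]
    · simp only [if_neg h, add_zero]
      have h1 : |w i * X i j * w j| ≤ b i * b j := by
        rw [abs_mul, abs_mul]
        calc |w i| * |X i j| * |w j|
            ≤ |w i| * (Real.sqrt (X i i) * Real.sqrt (X j j)) * |w j| := by
              gcongr
              exact habs i j
          _ = b i * b j := by simp only [hbdef]; ring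
      linarith [neg_abs_le (w i * X i j * w j)]
  have hsum : ∑ i, ∑ j, (-(b i * b j) + (if i = j then 2 * b i ^ 2 else 0))
      ≤ ∑ i, ∑ j, w i * X i j * w j :=
    Finset.sum_le_sum fun i _ => Finset.sum_le_sum fun j _ => hpt i j
  have hLHS : ∑ i, ∑ j, (-(b i * b j) + (if i = j then 2 * b i ^ 2 else 0))
      = -((∑ i, b i) ^ 2) + 2 * ∑ i, b i ^ 2 := by
    simp only [Finset.sum_add_distrib, Finset.sum_ite_eq, Finset.mem_univ, if_true]
    rw [sq, Finset.sum_mul_sum, Finset.mul_sum]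
    simp [Finset.sum_neg_distrib]
  set S := ∑ i, b i with hS
  set Q := ∑ i, b i ^ 2 with hQ
  have hQ0 : 0 ≤ Q := Finset.sum_nonneg fun i _ => sq_nonneg _
  have hSnQ : S ^ 2 ≤ n * Q := by
    have := Finset.sum_mul_sq_le_sq_mul_sq Finset.univ (fun _ : Fin n => (1:ℝ)) b
    simpa using this
  have hST : S ^ 2 ≤ T := by
    have hcs := Finset.sum_mul_sq_le_sq_mul_sq Finset.univ
      (fun i => Real.sqrt (X i i)) (fun i => |w i|)
    have h1 : ∑ i, Real.sqrt (X i i) ^ 2 = ∑ i, X i i := by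
      exact Finset.sum_congr rfl fun i _ => Real.sq_sqrt (hdiag i)
    have h2 : ∑ i, |w i| ^ 2 = 1 := by simpa [sq_abs] using hw
    have h3 : ∑ i, X i i ≤ T := by
      simpa [Matrix.trace, Matrix.diag] using htr
    calc S ^ 2 ≤ (∑ i, Real.sqrt (X i i) ^ 2) * ∑ i, |w i| ^ 2 := hcs
      _ = ∑ i, X i i := by rw [h1, h2, mul_one]
      _ ≤ T := h3
  have hn' : (2:ℝ) ≤ (n:ℝ) := by exact_mod_cast hn
  have hn0 : (0:ℝ) < n := by linarith
  have key : 2 * T / n - T ≤ -(S ^ 2) + 2 * Q := by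
    rw [sub_le_iff_le_add, div_le_iff₀ hn0]
    nlinarith [mul_nonneg (sub_nonneg.2 hST) (by linarith : (0:ℝ) ≤ (n:ℝ) - 2)]
  calc 2 * T / n - T ≤ -(S ^ 2) + 2 * Q := key
    _ = _ := hLHS.symm
    _ ≤ _ := hsum


/-- For `n ≥ 2` and a real symmetric `n × n` matrix `X` satisfying the
2×2 minor constraints, nonnegative diagonal, and `tr X ≤ T`, every eigenvalue of `X`
(in particular the smallest) is at least `2 * T / n - T`. -/
theorem stmt_6 (n : ℕ) (hn : 2 ≤ n) (T : ℝ) (hT : 0 ≤ T)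
    (X : Matrix (Fin n) (Fin n) ℝ) (hX : X.IsHermitian)
    (hminor : ∀ i j, (X i j) ^ 2 ≤ X i i * X j j)
    (hdiag : ∀ i, 0 ≤ X i i)
    (htr : X.trace ≤ T) :
    ∀ i, 2 * T / n - T ≤ hX.eigenvalues i := by
  intro i
  set v : Fin n → ℝ := ⇑(hX.eigenvectorBasis i) with hv
  have hev := hX.mulVec_eigenvectorBasis i
  have hinner : ∑ j, v j * v j = 1 := by
    have horth := hX.eigenvectorBasis.orthonormal
    rw [orthonormal_iff_ite] at horth
    have h2 := horth i i
    simp only [if_pos rfl, PiLp.inner_apply, RCLike.inner_apply, starRingEnd_apply, star_trivial,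
      if_true] at h2
    simpa using h2
  have hw : ∑ j, v j ^ 2 = 1 := by simpa [sq] using hinner
  have heig : hX.eigenvalues i = ∑ a, ∑ j, v a * X a j * v j := by
    have h3 : ∑ a, v a * (X *ᵥ v) a = hX.eigenvalues i := by
      rw [← hv] at hev
      rw [hev]
      simp only [Pi.smul_apply, smul_eq_mul]
      calc ∑ a, v a * (hX.eigenvalues i * v a) = hX.eigenvalues i * ∑ a, v a * v a := by
            rw [Finset.mul_sum]; exact Finset.sum_congr rfl fun a _ => by ring
        _ = hX.eigenvalues i := by rw [hinner, mul_one]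
    rw [← h3]
    simp [Matrix.mulVec, dotProduct, Finset.mul_sum, mul_assoc]
  rw [heig]
  exact quad_bound n hn T hT X hminor hdiag htr v hw
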